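/- Let A be a 2-torsion free unital associative R-algebra and let n ≥ 3. Then the full matrix algebra M_n(A) has the Lie derivation property: every R-linear map L : M_n(A) → M_n(A) satisfying L([x,y]) = [L(x),y] + [x,L(y)] for all x, y can be written as L = D + τ, where D is a derivation of M_n(A) and τ : M_n(A) → M_n(A) is R-linear with values in the center of M_n(A) and τ([x,y]) = 0 for all x, y ∈ M_n(A). -/

import Mathlib

open Matrix

set_option linter.unusedSectionVars false
set_option maxHeartbeats 1600000

namespace Stmt13Aux

variable {R : Type*} [CommRing R] {A : Type*} [Ring A] [Algebra R A] {n : ℕ}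

/-- diagonal matrix unit -/
abbrev ee (i : Fin n) : Matrix (Fin n) (Fin n) A := Matrix.single i i (1 : A)

variable (L : Matrix (Fin n) (Fin n) A →ₗ[R] Matrix (Fin n) (Fin n) A)

/-- correcting inner element -/
def T1 : Matrix (Fin n) (Fin n) A := ∑ l : Fin n, ee l * L (ee l)

/-- the corrected Lie derivation -/
def Lam (x : Matrix (Fin n) (Fin n) A) : Matrix (Fin n) (Fin n) A :=
  L x + (T1 L * x - x * T1 L)

section basic

variable (hL : ∀ x y : Matrix (Fin n) (Fin n) A,
      L (x * y - y * x) = L x * y - y * L x + (x * L y - L y * x))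

include hL

lemma hA1 {i p q : Fin n} (hpi : p ≠ i) (hqp : q ≠ p) (hqi : q ≠ i) :
    L (ee i) p q = 0 := by
  have h := hL (ee i) (ee p)
  rw [single_mul_single_of_ne (h := hpi.symm), single_mul_single_of_ne (h := hpi),
    sub_zero, map_zero] at h
  have h2 := congrFun (congrFun h.symm p) q
  simp only [Matrix.add_apply, Matrix.sub_apply, Matrix.zero_apply,
    mul_single_apply_of_ne (hbj := hqp),
    single_mul_apply_same,
    single_mul_apply_of_ne (h := hpi),
    mul_single_apply_of_ne (hbj := hqi), one_mul] at h2
  simpa using h2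

lemma hA2 {i p : Fin n} (hpi : p ≠ i) :
    L (ee i) p i + L (ee p) p i = 0 := by
  have h := hL (ee i) (ee p)
  rw [single_mul_single_of_ne (h := hpi.symm), single_mul_single_of_ne (h := hpi),
    sub_zero, map_zero] at h
  have h2 := congrFun (congrFun h.symm p) i
  simp only [Matrix.add_apply, Matrix.sub_apply, Matrix.zero_apply,
    mul_single_apply_of_ne (hbj := hpi.symm),
    single_mul_apply_same,
    single_mul_apply_of_ne (h := hpi),
    mul_single_apply_same, one_mul, mul_one] at h2
  have h3 : -(L (ee i) p i + L (ee (A := A) p) p i) = 0 := by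
    rw [neg_add]; simpa using h2
  exact neg_eq_zero.mp h3

lemma T1_apply (p q : Fin n) : T1 L p q = L (ee (A := A) p) p q := by
  unfold T1
  rw [Matrix.sum_apply]
  rw [Finset.sum_eq_single p]
  · simp
  · intro b _ hbp
    exact single_mul_apply_of_ne (1:A) b b p q hbp.symm (L (ee b))
  · simp

lemma Lam_e_offdiag {i p q : Fin n} (hpq : p ≠ q) : Lam L (ee (A := A) i) p q = 0 := by
  unfold Lam
  rw [Matrix.add_apply, Matrix.sub_apply]
  by_cases hpi : p = i
  · subst hpi
    have hqp : q ≠ p := fun h => hpq h.symm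
    rw [mul_single_apply_of_ne (hbj := hqp),
      single_mul_apply_same, T1_apply L hL, one_mul]
    abel
  · by_cases hqi : q = i
    · subst hqi
      rw [mul_single_apply_same,
        single_mul_apply_of_ne (h := hpi), T1_apply L hL, mul_one, sub_zero]
      exact hA2 L hL (i := q) (p := p) hpi
    · rw [mul_single_apply_of_ne (hbj := hqi),
        single_mul_apply_of_ne (h := hpi),
        hA1 L hL hpi (fun h => hpq h.symm) hqi]
      simp

omit hL in
lemma Lam_add (x y : Matrix (Fin n) (Fin n) A) : Lam L (x + y) = Lam L x + Lam L y := by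
  simp only [Lam, map_add, mul_add, add_mul]
  abel

omit hL in
lemma Lam_sub (x y : Matrix (Fin n) (Fin n) A) : Lam L (x - y) = Lam L x - Lam L y := by
  simp only [Lam, map_sub, mul_sub, sub_mul]
  abel

omit hL in
lemma Lam_zero : Lam L (0 : Matrix (Fin n) (Fin n) A) = 0 := by
  simp [Lam]

omit hL in
lemma Lam_smul (r : R) (x : Matrix (Fin n) (Fin n) A) : Lam L (r • x) = r • Lam L x := by
  simp only [Lam, _root_.map_smul, Matrix.mul_smul, Matrix.smul_mul, smul_sub, smul_add]

lemma hLam (x y : Matrix (Fin n) (Fin n) A) :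
    Lam L (x * y - y * x) =
      Lam L x * y - y * Lam L x + (x * Lam L y - Lam L y * x) := by
  simp only [Lam, hL]
  noncomm_ring

end basic

-- index helpers
lemma exists_ne2 (hn : 3 ≤ n) (i j : Fin n) : ∃ k : Fin n, k ≠ i ∧ k ≠ j := by
  have h1 : (({i, j} : Finset (Fin n))ᶜ).Nonempty := by
    rw [← Finset.card_pos, Finset.card_compl, Fintype.card_fin]
    have := Finset.card_insert_le i ({j} : Finset (Fin n))
    simp only [Finset.card_singleton] at this
    omega
  obtain ⟨k, hk⟩ := h1
  simp only [Finset.mem_compl, Finset.mem_insert, Finset.mem_singleton, not_or] at hk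
  exact ⟨k, hk.1, hk.2⟩

lemma exists_ne1 (hn : 3 ≤ n) (i : Fin n) : ∃ j : Fin n, j ≠ i :=
  (exists_ne2 hn i i).imp fun _ hk => hk.1

section step2

variable (hL : ∀ x y : Matrix (Fin n) (Fin n) A,
      L (x * y - y * x) = L x * y - y * L x + (x * L y - L y * x))

include hL

lemma Lam_e_rel {i j : Fin n} (hij : i ≠ j) (a : A) :
    Lam L (ee (A := A) i) i i * a = a * Lam L (ee (A := A) i) j j := by
  have h := hLam L hL (ee i) (Matrix.single i j a)
  rw [show ee (A := A) i * Matrix.single i j a = Matrix.single i j a by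
        rw [single_mul_single_same, one_mul],
      single_mul_single_of_ne (h := fun hh => hij hh.symm), sub_zero] at h
  have h2 := congrFun (congrFun h i) j
  rw [Matrix.add_apply, Matrix.sub_apply, Matrix.sub_apply,
    mul_single_apply_same, single_mul_apply_same,
    single_mul_apply_same,
    mul_single_apply_of_ne (hbj := fun hh => hij hh.symm),
    one_mul, sub_zero] at h2
  exact sub_eq_zero.mp (right_eq_add.mp h2)

lemma Lam_e_apply (i p q : Fin n) :
    Lam L (ee (A := A) i) p q = if p = q then Lam L (ee (A := A) i) i i else 0 := by
  by_cases hpq : p = q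
  · subst hpq
    rw [if_pos rfl]
    by_cases hpi : p = i
    · subst hpi; rfl
    · have := Lam_e_rel L hL (i := i) (j := p) (fun h => hpi h.symm) 1
      rw [mul_one, one_mul] at this
      exact this.symm
  · rw [if_neg hpq]; exact Lam_e_offdiag L hL hpq

lemma gam_central (hn : 3 ≤ n) (i : Fin n) (a : A) :
    Lam L (ee (A := A) i) i i * a = a * Lam L (ee (A := A) i) i i := by
  obtain ⟨j, hj⟩ := exists_ne1 hn i
  rw [Lam_e_rel L hL hj.symm a]
  congr 1
  rw [Lam_e_apply L hL, if_pos rfl]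

lemma comm_Lam_e (hn : 3 ≤ n) (j : Fin n) (x : Matrix (Fin n) (Fin n) A) :
    x * Lam L (ee (A := A) j) = Lam L (ee (A := A) j) * x := by
  ext p q
  rw [Matrix.mul_apply, Matrix.mul_apply,
    Finset.sum_eq_single q (fun k _ hk => by rw [Lam_e_apply L hL, if_neg hk, mul_zero])
      (by simp),
    Finset.sum_eq_single p
      (fun k _ hk => by rw [Lam_e_apply L hL, if_neg (fun hh => hk hh.symm), zero_mul])
      (by simp),
    Lam_e_apply L hL, if_pos rfl, Lam_e_apply L hL j p p, if_pos rfl]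
  exact (gam_central L hL hn j (x p q)).symm

lemma Lam_off (htf : ∀ a : A, a + a = 0 → a = 0) (hn : 3 ≤ n) {i j : Fin n}
    (hij : i ≠ j) (a : A) :
    Lam L (Matrix.single i j a) =
      Matrix.single i j (Lam L (Matrix.single i j a) i j) := by
  have h1 := hLam L hL (ee i) (Matrix.single i j a)
  rw [show ee (A := A) i * Matrix.single i j a = Matrix.single i j a by
        rw [single_mul_single_same, one_mul],
      single_mul_single_of_ne (h := fun hh => hij hh.symm), sub_zero,
      ← comm_Lam_e L hL hn i (Matrix.single i j a), sub_self, zero_add] at h1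
  have h2' := hLam L hL (Matrix.single i j a) (ee j)
  rw [show Matrix.single i j a * ee (A := A) j = Matrix.single i j a by
        rw [single_mul_single_same, mul_one],
      single_mul_single_of_ne (h := hij.symm), sub_zero,
      comm_Lam_e L hL hn j (Matrix.single i j a), sub_self, add_zero] at h2'
  ext p q
  by_cases hpi : p = i
  · subst hpi
    by_cases hqj : q = j
    · subst hqj; rw [single_apply_same]
    · rw [single_apply_of_ne (h := fun hc => hqj hc.2.symm)]
      have e2 := congrFun (congrFun h2' p) q
      rw [Matrix.sub_apply, mul_single_apply_of_ne (hbj := hqj),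
        single_mul_apply_of_ne (h := hij)] at e2
      simpa using e2
  · by_cases hqi : q = i
    · subst hqi
      have e1 := congrFun (congrFun h1 p) q
      rw [Matrix.sub_apply, single_mul_apply_of_ne (h := hpi),
        mul_single_apply_same, mul_one, zero_sub] at e1
      rw [single_apply_of_ne (h := fun hc => hij hc.2.symm)]
      exact htf _ (eq_neg_iff_add_eq_zero.mp e1)
    · have e1 := congrFun (congrFun h1 p) q
      rw [Matrix.sub_apply, single_mul_apply_of_ne (h := hpi),
        mul_single_apply_of_ne (hbj := hqi)] at e1
      rw [single_apply_of_ne (h := fun hc => hpi hc.1.symm)]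
      simpa using e1

end step2

/-- a fixed index different from `i` -/
def oth (hn : 3 ≤ n) (i : Fin n) : Fin n :=
  if i = ⟨0, by omega⟩ then ⟨1, by omega⟩ else ⟨0, by omega⟩

lemma oth_ne (hn : 3 ≤ n) (i : Fin n) : oth hn i ≠ i := by
  unfold oth
  split_ifs with h
  · rw [h]; simp [Fin.ext_iff]
  · exact fun hc => h hc.symm

/-- the off-diagonal coefficient map -/
def phi (i j : Fin n) (a : A) : A := Lam L (Matrix.single i j a) i j

/-- the central coefficient of the image of a diagonal element -/
def zet (hn : 3 ≤ n) (i : Fin n) (a : A) : A :=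
  Lam L (Matrix.single i i a) (oth hn i) (oth hn i)

/-- the diagonal coefficient map -/
def psi (hn : 3 ≤ n) (i : Fin n) (a : A) : A :=
  Lam L (Matrix.single i i a) i i - zet L hn i a

section step3

variable (hL : ∀ x y : Matrix (Fin n) (Fin n) A,
      L (x * y - y * x) = L x * y - y * L x + (x * L y - L y * x))
  (htf : ∀ a : A, a + a = 0 → a = 0) (hn : 3 ≤ n)

include hL htf hn

lemma Lam_diag_offdiag (i : Fin n) (a : A) {p q : Fin n} (hpq : p ≠ q) :
    Lam L (Matrix.single i i a) p q = 0 := by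
  have h := hLam L hL (Matrix.single i i a) (ee q)
  have hb : Matrix.single i i a * ee (A := A) q - ee q * Matrix.single i i a = 0 := by
    by_cases hiq : i = q
    · subst hiq
      rw [single_mul_single_same, single_mul_single_same, mul_one, one_mul, sub_self]
    · rw [single_mul_single_of_ne (h := hiq),
        single_mul_single_of_ne (h := fun hh => hiq hh.symm), sub_self]
  rw [hb, Lam_zero, comm_Lam_e L hL hn q (Matrix.single i i a), sub_self, add_zero] at h
  have e := congrFun (congrFun h p) q
  simp only [Matrix.zero_apply, Matrix.sub_apply, mul_single_apply_same,
    single_mul_apply_of_ne (h := hpq), mul_one, sub_zero] at e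
  exact e.symm

lemma Lam_diag_rel (i : Fin n) {p q : Fin n} (hpi : p ≠ i) (hqi : q ≠ i) (hpq : p ≠ q)
    (a b : A) :
    Lam L (Matrix.single i i a) p p * b = b * Lam L (Matrix.single i i a) q q := by
  have h := hLam L hL (Matrix.single i i a) (Matrix.single p q b)
  rw [single_mul_single_of_ne (h := Ne.symm hpi), single_mul_single_of_ne (h := hqi),
    sub_zero, Lam_zero, Lam_off L hL htf hn hpq b,
    single_mul_single_of_ne (h := Ne.symm hpi), single_mul_single_of_ne (h := hqi),
    sub_zero, add_zero] at h
  have e := congrFun (congrFun h p) q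
  simp only [Matrix.zero_apply, Matrix.sub_apply, mul_single_apply_same,
    single_mul_apply_same] at e
  exact sub_eq_zero.mp e.symm

lemma z_eq (i : Fin n) {q : Fin n} (hqi : q ≠ i) (a : A) :
    Lam L (Matrix.single i i a) q q = zet L hn i a := by
  by_cases hq : q = oth hn i
  · rw [hq]; rfl
  · have h := Lam_diag_rel L hL htf hn i (p := q) (q := oth hn i) hqi (oth_ne hn i) hq a 1
    rw [mul_one, one_mul] at h
    exact h

lemma z_central (i : Fin n) (a b : A) : zet L hn i a * b = b * zet L hn i a := by
  obtain ⟨p, hpi, hpo⟩ := exists_ne2 hn i (oth hn i)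
  have h := Lam_diag_rel L hL htf hn i (p := oth hn i) (q := p) (oth_ne hn i) hpi
    (fun hh => hpo hh.symm) a b
  rw [z_eq L hL htf hn i hpi a] at h
  simpa [zet] using h

lemma Lam_diag (i : Fin n) (a : A) :
    Lam L (Matrix.single i i a) =
      Matrix.single i i (psi L hn i a) + Matrix.diagonal (fun _ => zet L hn i a) := by
  ext p q
  rw [Matrix.add_apply]
  by_cases hpq : p = q
  · subst hpq
    rw [Matrix.diagonal_apply_eq]
    by_cases hpi : p = i
    · subst hpi
      rw [single_apply_same, psi, sub_add_cancel]
    · rw [single_apply_of_ne (h := fun hc => hpi hc.1.symm), zero_add,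
        z_eq L hL htf hn i hpi a]
  · rw [Matrix.diagonal_apply_ne _ hpq, Lam_diag_offdiag L hL htf hn i a hpq,
      single_apply_of_ne (h := fun hc => hpq (hc.1.symm.trans hc.2)), add_zero]

lemma zet_switch {i j : Fin n} (hij : i ≠ j) (a b : A) :
    zet L hn i (a * b) = zet L hn j (b * a) := by
  obtain ⟨k, hki, hkj⟩ := exists_ne2 hn i j
  have h := hLam L hL (Matrix.single i j a) (Matrix.single j i b)
  rw [single_mul_single_same, single_mul_single_same, Lam_sub,
    Lam_off L hL htf hn hij a, Lam_off L hL htf hn hij.symm b,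
    single_mul_single_same, single_mul_single_same,
    single_mul_single_same, single_mul_single_same,
    Lam_diag L hL htf hn i (a * b), Lam_diag L hL htf hn j (b * a)] at h
  have e := congrFun (congrFun h k) k
  simp only [Matrix.sub_apply, Matrix.add_apply, Matrix.diagonal_apply_eq,
    single_apply_of_row_ne hki.symm, single_apply_of_row_ne hkj.symm,
    zero_add, add_zero, sub_zero, sub_self] at e
  exact sub_eq_zero.mp e

lemma psi_mul {i j : Fin n} (hij : i ≠ j) (a b : A) :
    psi L hn i (a * b) = phi L i j a * b + a * phi L j i b := by
  have h := hLam L hL (Matrix.single i j a) (Matrix.single j i b)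
  rw [single_mul_single_same, single_mul_single_same, Lam_sub,
    Lam_off L hL htf hn hij a, Lam_off L hL htf hn hij.symm b,
    single_mul_single_same, single_mul_single_same,
    single_mul_single_same, single_mul_single_same,
    Lam_diag L hL htf hn i (a * b), Lam_diag L hL htf hn j (b * a)] at h
  have e := congrFun (congrFun h i) i
  simp only [Matrix.sub_apply, Matrix.add_apply, Matrix.diagonal_apply_eq,
    single_apply_same, single_apply_of_row_ne (Ne.symm hij),
    zero_add, add_zero, sub_zero] at e
  rw [zet_switch L hL htf hn hij a b, add_sub_cancel_right] at e
  simpa [phi] using e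

lemma phi_mul3 {i j k : Fin n} (hij : i ≠ j) (hjk : j ≠ k) (hik : i ≠ k) (a b : A) :
    phi L i k (a * b) = phi L i j a * b + a * phi L j k b := by
  have h := hLam L hL (Matrix.single i j a) (Matrix.single j k b)
  rw [single_mul_single_same, single_mul_single_of_ne (h := Ne.symm hik), sub_zero,
    Lam_off L hL htf hn hik (a * b), Lam_off L hL htf hn hij a, Lam_off L hL htf hn hjk b,
    single_mul_single_same, single_mul_single_of_ne (h := Ne.symm hik),
    single_mul_single_same, single_mul_single_of_ne (h := Ne.symm hik)] at h
  have e := congrFun (congrFun h i) k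
  simp only [Matrix.sub_apply, Matrix.add_apply, single_apply_same, sub_zero,
    Matrix.zero_apply] at e
  simpa [phi] using e

lemma phi_diagL {i j : Fin n} (hij : i ≠ j) (a b : A) :
    phi L i j (a * b) = psi L hn i a * b + a * phi L i j b := by
  have h := hLam L hL (Matrix.single i i a) (Matrix.single i j b)
  rw [single_mul_single_same, single_mul_single_of_ne (h := Ne.symm hij), sub_zero,
    Lam_off L hL htf hn hij (a * b), Lam_diag L hL htf hn i a, Lam_off L hL htf hn hij b,
    add_mul, mul_add,
    single_mul_single_same, single_mul_single_of_ne (h := Ne.symm hij),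
    single_mul_single_same, single_mul_single_of_ne (h := Ne.symm hij)] at h
  have e := congrFun (congrFun h i) j
  simp only [Matrix.sub_apply, Matrix.add_apply, single_apply_same,
    Matrix.diagonal_mul, Matrix.mul_diagonal, Matrix.zero_apply, zero_add, sub_zero] at e
  rw [z_central L hL htf hn i a b] at e
  rw [add_sub_cancel_right] at e
  simpa [phi] using e

lemma phi_diagR {i j : Fin n} (hij : i ≠ j) (a b : A) :
    phi L i j (a * b) = phi L i j a * b + a * psi L hn j b := by
  have h := hLam L hL (Matrix.single i j a) (Matrix.single j j b)
  rw [single_mul_single_same, single_mul_single_of_ne (h := Ne.symm hij), sub_zero,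
    Lam_off L hL htf hn hij (a * b), Lam_off L hL htf hn hij a, Lam_diag L hL htf hn j b,
    mul_add, add_mul,
    single_mul_single_same, single_mul_single_of_ne (h := Ne.symm hij),
    single_mul_single_same, single_mul_single_of_ne (h := Ne.symm hij)] at h
  have e := congrFun (congrFun h i) j
  simp only [Matrix.sub_apply, Matrix.add_apply, single_apply_same,
    Matrix.diagonal_mul, Matrix.mul_diagonal, Matrix.zero_apply, zero_add, sub_zero] at e
  rw [z_central L hL htf hn j b a] at e
  rw [add_sub_cancel_right] at e
  simpa [phi] using e

end step3

/-- index 0 -/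
def iz (hn : 3 ≤ n) : Fin n := ⟨0, by omega⟩
/-- index 1 -/
def io (hn : 3 ≤ n) : Fin n := ⟨1, by omega⟩

lemma iz_ne_io (hn : 3 ≤ n) : iz hn ≠ io hn := by simp [iz, io, Fin.ext_iff]

/-- the inner diagonal part -/
def tt (hn : 3 ≤ n) (i : Fin n) : A := if i = iz hn then 0 else phi L i (iz hn) 1

/-- the entrywise derivation of `A` -/
def delta (hn : 3 ≤ n) (a : A) : A := psi L hn (iz hn) a

/-- the central map -/
def zz (hn : 3 ≤ n) (a : A) : A := zet L hn (iz hn) a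

section step4

variable (hL : ∀ x y : Matrix (Fin n) (Fin n) A,
      L (x * y - y * x) = L x * y - y * L x + (x * L y - L y * x))
  (htf : ∀ a : A, a + a = 0 → a = 0) (hn : 3 ≤ n)

lemma tt_iz : tt L (A := A) hn (iz hn) = 0 := if_pos rfl

lemma tt_ne {i : Fin n} (hi : i ≠ iz hn) : tt L hn i = phi L i (iz hn) 1 := if_neg hi

include hL htf hn

lemma psi_one (i : Fin n) : psi L hn i 1 = 0 := by
  have h := phi_diagL L hL htf hn (Ne.symm (oth_ne hn i)) (1 : A) 1
  rw [one_mul, mul_one, one_mul] at h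
  exact right_eq_add.mp h

lemma u_antisym {i j : Fin n} (hij : i ≠ j) : phi L i j 1 + phi L j i 1 = 0 := by
  have h := psi_mul L hL htf hn hij (1 : A) 1
  rw [one_mul, mul_one, one_mul, psi_one L hL htf hn i] at h
  exact h.symm

lemma u_cocycle {i j k : Fin n} (hij : i ≠ j) (hjk : j ≠ k) (hik : i ≠ k) :
    phi L i k (1 : A) = phi L i j 1 + phi L j k 1 := by
  have h := phi_mul3 L hL htf hn hij hjk hik (1 : A) 1
  rwa [one_mul, mul_one, one_mul] at h

lemma phi_eq_psi_add {i j : Fin n} (hij : i ≠ j) (a : A) :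
    phi L i j a = psi L hn i a + a * phi L i j 1 := by
  have h := phi_diagL L hL htf hn hij a (1 : A)
  rwa [mul_one, mul_one] at h

lemma phi_eq_u_add {i j : Fin n} (hij : i ≠ j) (a : A) :
    phi L i j a = phi L i j 1 * a + psi L hn j a := by
  have h := phi_diagR L hL htf hn hij (1 : A) a
  rwa [one_mul, one_mul] at h

lemma psi_formula (i : Fin n) (a : A) :
    psi L hn i a = delta L hn a + tt L hn i * a - a * tt L hn i := by
  by_cases hi : i = iz hn
  · subst hi
    rw [tt_iz]
    simp [delta]
  · have h1 := phi_eq_psi_add L hL htf hn (i := i) (j := iz hn) hi a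
    have h2 := phi_eq_u_add L hL htf hn (i := i) (j := iz hn) hi a
    have h3 : psi L hn i a =
        phi L i (iz hn) 1 * a + psi L hn (iz hn) a - a * phi L i (iz hn) 1 :=
      eq_sub_of_add_eq (h1.symm.trans h2)
    rw [tt_ne L hn hi]
    simp only [delta]
    rw [h3]; abel

lemma u_eq {i j : Fin n} (hij : i ≠ j) :
    phi L i j (1 : A) = tt L hn i - tt L hn j := by
  by_cases hi : i = iz hn
  · subst hi
    rw [tt_iz, tt_ne L hn (Ne.symm hij), zero_sub]
    exact eq_neg_of_add_eq_zero_left (u_antisym L hL htf hn hij)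
  · by_cases hj : j = iz hn
    · subst hj
      rw [tt_iz, tt_ne L hn hi, sub_zero]
    · simp only [tt, if_neg hi, if_neg hj]
      rw [u_cocycle L hL htf hn hi (fun hh => hj hh.symm) hij,
        eq_neg_of_add_eq_zero_left (u_antisym L hL htf hn (fun hh => hj hh.symm)),
        sub_eq_add_neg]

lemma phi_formula {i j : Fin n} (hij : i ≠ j) (a : A) :
    phi L i j a = delta L hn a + tt L hn i * a - a * tt L hn j := by
  rw [phi_eq_psi_add L hL htf hn hij a, psi_formula L hL htf hn i a, u_eq L hL htf hn hij]
  noncomm_ring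

lemma delta_mul (a b : A) :
    delta L hn (a * b) = delta L hn a * b + a * delta L hn b := by
  have h := psi_mul L hL htf hn (iz_ne_io hn) a b
  rw [phi_formula L hL htf hn (iz_ne_io hn) a,
    phi_formula L hL htf hn (Ne.symm (iz_ne_io hn)) b] at h
  rw [tt_iz, tt_ne L hn (Ne.symm (iz_ne_io hn))] at h
  simp only [delta] at h ⊢
  rw [h]
  noncomm_ring

lemma zz_comm (a b : A) : zz L hn (a * b) = zz L hn (b * a) := by
  have h1 := zet_switch L hL htf hn (iz_ne_io hn) a b
  have h2 := zet_switch L hL htf hn (Ne.symm (iz_ne_io hn)) (b * a) 1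
  rw [mul_one, one_mul] at h2
  exact (h1.trans h2 : _)

lemma zz_central (a b : A) : zz L hn a * b = b * zz L hn a :=
  z_central L hL htf hn (iz hn) a b

lemma zet_eq_zz (i : Fin n) (a : A) : zet L hn i a = zz L hn a := by
  by_cases hi : i = iz hn
  · subst hi; rfl
  · have h := zet_switch L hL htf hn (i := i) (j := iz hn) hi a 1
    rwa [mul_one, one_mul] at h

lemma Lam_basis (i j : Fin n) (a : A) :
    Lam L (Matrix.single i j a) =
      (Matrix.diagonal (tt L (A := A) hn) * Matrix.single i j a
        - Matrix.single i j a * Matrix.diagonal (tt L hn))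
      + Matrix.single i j (delta L hn a)
      + (if i = j then Matrix.diagonal (fun _ => zz L hn a) else 0) := by
  by_cases hij : i = j
  · subst hij
    rw [if_pos rfl, Lam_diag L hL htf hn i a, psi_formula L hL htf hn i a,
      zet_eq_zz L hL htf hn i a]
    ext p q
    simp only [Matrix.sub_apply, Matrix.add_apply, Matrix.diagonal_mul, Matrix.mul_diagonal,
      Matrix.single, Matrix.of_apply, Matrix.diagonal_apply]
    by_cases hp : i = p <;> by_cases hq : i = q <;>
      simp only [hp, hq, and_self, if_true, if_false, and_true, true_and, and_false,
        false_and, if_neg, mul_zero, zero_mul, add_zero, zero_add, sub_zero, zero_sub] <;>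
      first
        | (subst hp; subst hq; simp; noncomm_ring)
        | simp_all
  · have hphi := phi_formula L hL htf hn hij a
    simp only [phi] at hphi
    rw [if_neg hij, Lam_off L hL htf hn hij a, hphi, add_zero]
    ext p q
    simp only [Matrix.sub_apply, Matrix.add_apply, Matrix.diagonal_mul, Matrix.mul_diagonal,
      Matrix.single, Matrix.of_apply]
    by_cases hp : i = p <;> by_cases hq : j = q <;>
      simp only [hp, hq, and_self, if_true, and_true, true_and, and_false, false_and,
        if_false, mul_zero, zero_mul, add_zero, zero_add, sub_zero, zero_sub] <;>
      noncomm_ring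

end step4

section linear

variable (hn : 3 ≤ n)

lemma delta_add (a b : A) : delta L hn (a + b) = delta L hn a + delta L hn b := by
  simp only [delta, psi, zet, single_add, Lam_add, Matrix.add_apply]
  abel

lemma delta_smul (r : R) (a : A) : delta L hn (r • a) = r • delta L hn a := by
  simp only [delta, psi, zet, ← smul_single, Lam_smul, Matrix.smul_apply, smul_sub]

lemma zz_add (a b : A) : zz L hn (a + b) = zz L hn a + zz L hn b := by
  simp only [zz, zet, single_add, Lam_add, Matrix.add_apply]

lemma zz_smul (r : R) (a : A) : zz L hn (r • a) = r • zz L hn a := by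
  simp only [zz, zet, ← smul_single, Lam_smul, Matrix.smul_apply]

lemma zz_zero : zz L (A := A) hn 0 = 0 := by
  have h := zz_add L hn (0 : A) 0
  rw [add_zero] at h
  exact right_eq_add.mp h

lemma trace_std (i j : Fin n) (a : A) :
    Matrix.trace (Matrix.single i j a) = if i = j then a else 0 := by
  by_cases hij : i = j
  · subst hij
    rw [if_pos rfl]
    simp [Matrix.trace, Matrix.diag, Matrix.single, Matrix.of_apply]
  · rw [if_neg hij]
    unfold Matrix.trace
    apply Finset.sum_eq_zero
    intro k _
    show Matrix.single i j a k k = 0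
    exact single_apply_of_ne i j a k k (fun hc => hij (hc.1.trans hc.2.symm))

lemma L_eq_Lam (x : Matrix (Fin n) (Fin n) A) :
    L x = Lam L x - (T1 L * x - x * T1 L) := by
  rw [Lam]; abel

end linear

end Stmt13Aux

open Stmt13Aux

/-- for a 2-torsion free unital `R`-algebra `A` and `n ≥ 3`, the full
matrix algebra `Mₙ(A)` has the Lie derivation property. -/
theorem stmt_13 (R : Type*) [CommRing R] (A : Type*) [Ring A] [Algebra R A]
    (h2 : ∀ a : A, a + a = 0 → a = 0) (n : ℕ) (hn : 3 ≤ n)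
    (L : Matrix (Fin n) (Fin n) A →ₗ[R] Matrix (Fin n) (Fin n) A)
    (hL : ∀ x y : Matrix (Fin n) (Fin n) A,
      L (x * y - y * x) = L x * y - y * L x + (x * L y - L y * x)) :
    ∃ D τ : Matrix (Fin n) (Fin n) A →ₗ[R] Matrix (Fin n) (Fin n) A,
      (∀ x y : Matrix (Fin n) (Fin n) A, D (x * y) = D x * y + x * D y) ∧
      (∀ x y : Matrix (Fin n) (Fin n) A, τ x * y = y * τ x) ∧
      (∀ x y : Matrix (Fin n) (Fin n) A, τ (x * y - y * x) = 0) ∧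
      L = D + τ := by
  classical
  set S : Matrix (Fin n) (Fin n) A := Matrix.diagonal (tt L hn) - T1 L with hS
  let δl : A →ₗ[R] A :=
    { toFun := delta L hn
      map_add' := delta_add L hn
      map_smul' := delta_smul L hn }
  let zzl : A →ₗ[R] A :=
    { toFun := zz L hn
      map_add' := zz_add L hn
      map_smul' := zz_smul L hn }
  let D : Matrix (Fin n) (Fin n) A →ₗ[R] Matrix (Fin n) (Fin n) A :=
    (LinearMap.mulLeft R S - LinearMap.mulRight R S) + δl.mapMatrix
  let τ : Matrix (Fin n) (Fin n) A →ₗ[R] Matrix (Fin n) (Fin n) A :=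
    { toFun := fun x => Matrix.diagonal (fun _ => zzl (Matrix.trace x))
      map_add' := fun x y => by
        ext p q
        by_cases hpq : p = q <;>
          simp [Matrix.diagonal_apply, hpq, Matrix.trace_add]
      map_smul' := fun r x => by
        ext p q
        by_cases hpq : p = q <;>
          simp [Matrix.diagonal_apply, hpq, Matrix.trace_smul] }
  refine ⟨D, τ, ?_, ?_, ?_, ?_⟩
  · -- D is a derivation
    intro x y
    have hmap : (x * y).map δl = x.map δl * y + x * y.map δl := by
      ext p q
      simp only [Matrix.map_apply, Matrix.mul_apply, Matrix.add_apply]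
      rw [map_sum, ← Finset.sum_add_distrib]
      refine Finset.sum_congr rfl fun k _ => ?_
      exact delta_mul L hL h2 hn (x p k) (y k q)
    simp only [D, LinearMap.add_apply, LinearMap.sub_apply, LinearMap.mulLeft_apply,
      LinearMap.mulRight_apply, LinearMap.mapMatrix_apply, hmap]
    noncomm_ring
  · -- τ is central-valued
    intro x y
    ext p q
    simp only [τ, LinearMap.coe_mk, AddHom.coe_mk, Matrix.diagonal_mul, Matrix.mul_diagonal]
    exact zz_central L hL h2 hn (Matrix.trace x) (y p q)
  · -- τ kills commutators
    intro x y
    have e1 : zzl (Matrix.trace (x * y)) = ∑ p, ∑ k, zzl (x p k * y k p) := by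
      rw [Matrix.trace, map_sum]
      refine Finset.sum_congr rfl fun p _ => ?_
      rw [show Matrix.diag (x * y) p = ∑ k, x p k * y k p from rfl, map_sum]
    have e2 : zzl (Matrix.trace (y * x)) = ∑ p, ∑ k, zzl (y p k * x k p) := by
      rw [Matrix.trace, map_sum]
      refine Finset.sum_congr rfl fun p _ => ?_
      rw [show Matrix.diag (y * x) p = ∑ k, y p k * x k p from rfl, map_sum]
    have e3 : ∀ p k : Fin n, zzl (y p k * x k p) = zzl (x k p * y p k) := fun p k =>
      zz_comm L hL h2 hn (y p k) (x k p)
    have key : zzl (Matrix.trace (x * y - y * x)) = 0 := by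
      rw [Matrix.trace_sub, map_sub, e1, e2]
      simp only [e3]
      rw [sub_eq_zero]
      exact Finset.sum_comm
    show Matrix.diagonal (fun _ => zzl (Matrix.trace (x * y - y * x))) = 0
    simp only [key, Matrix.diagonal_zero]
  · -- L = D + τ
    apply LinearMap.ext; intro x
    have hx := matrix_eq_sum_single x
    conv_lhs => rw [hx]
    conv_rhs => rw [hx]
    simp only [map_sum]
    refine Finset.sum_congr rfl fun i _ => Finset.sum_congr rfl fun j _ => ?_
    set a := x i j with ha
    have hmd : (Matrix.single i j a).map δl = Matrix.single i j (delta L hn a) := by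
      ext p q
      simp only [Matrix.map_apply, Matrix.single, Matrix.of_apply]
      split_ifs
      · rfl
      · exact map_zero δl
    rw [LinearMap.add_apply]
    simp only [D, τ, LinearMap.add_apply, LinearMap.sub_apply, LinearMap.mulLeft_apply,
      LinearMap.mulRight_apply, LinearMap.mapMatrix_apply, zzl, LinearMap.coe_mk,
      AddHom.coe_mk, hmd, trace_std]
    rw [L_eq_Lam, Lam_basis L hL h2 hn]
    by_cases hij : i = j
    · simp only [if_pos hij]
      simp only [hS, sub_mul, mul_sub]
      abel
    · simp only [if_neg hij, zz_zero L hn, Matrix.diagonal_zero]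
      simp only [hS, sub_mul, mul_sub]
      abel
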